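/- Let D be an integral domain whose Zariski space Zar(D) is a Noetherian topological space. Then the valuative dimension of D is at most twice the Krull dimension of D; that is, every valuation overring of D has Krull dimension at most 2·dim(D). -/

import Mathlib

section GammaLemmas
variable {Γ : Type*} [LinearOrderedCommGroupWithZero Γ]

lemma myPow_le_self {β : Γ} (hβ : β < 1) {c : ℕ} (hc : 1 ≤ c) : β ^ c ≤ β := by
  obtain ⟨k, rfl⟩ := Nat.exists_eq_add_of_le hc
  calc β ^ (1 + k) = β * β ^ k := by rw [pow_add, pow_one]
    _ ≤ β * 1 := mul_le_mul_right (pow_le_one' hβ.le k) β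
    _ = β := mul_one β

lemma myPow_lt_one {β : Γ} (hβ : β < 1) {c : ℕ} (hc : 1 ≤ c) : β ^ c < 1 :=
  lt_of_le_of_lt (myPow_le_self hβ hc) hβ

lemma myPow_inj {γ : Γ} (hγ0 : γ ≠ 0) (hγ : γ < 1) : ∀ {p p' : ℕ}, γ ^ p = γ ^ p' → p = p' := by
  have key : ∀ {p p' : ℕ}, p < p' → γ ^ p ≠ γ ^ p' := by
    intro p p' hpp' heq
    have h1 : γ ^ p * γ ^ (p' - p) = γ ^ p * 1 := by
      rw [mul_one, ← pow_add, Nat.add_sub_cancel' hpp'.le, ← heq]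
    have h2 := mul_left_cancel₀ (pow_ne_zero _ hγ0) h1
    exact (myPow_lt_one hγ (by omega)).ne h2
  intro p p' h
  rcases lt_trichotomy p p' with h'|h'|h'
  · exact absurd h (key h')
  · exact h'
  · exact absurd h.symm (key h')

lemma no_cross {γ β : Γ} (hγ : γ < 1) (hβγ : ∀ n : ℕ, β < γ ^ n)
    (d : ℕ) {c : ℕ} (hc : 1 ≤ c) : γ ^ d ≠ β ^ c := by
  have hβ : β < 1 := by simpa using hβγ 0
  exact (lt_of_le_of_lt (myPow_le_self hβ hc) (hβγ d)).ne'

lemma exp_pair_inj {γ β : Γ} (hγ0 : γ ≠ 0) (hβ0 : β ≠ 0) (hγ : γ < 1)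
    (hβγ : ∀ n : ℕ, β < γ ^ n) :
    ∀ {p q p' q' : ℕ}, γ ^ p * β ^ q = γ ^ p' * β ^ q' → p = p' ∧ q = q' := by
  have hβ : β < 1 := by simpa using hβγ 0
  suffices H : ∀ {p q p' q' : ℕ}, q ≤ q' → γ ^ p * β ^ q = γ ^ p' * β ^ q' → p = p' ∧ q = q' by
    intro p q p' q' h
    rcases le_total q q' with h'|h'
    · exact H h' h
    · exact (H h' h.symm).imp Eq.symm Eq.symm
  intro p q p' q' hqq' h
  have hcan : γ ^ p = γ ^ p' * β ^ (q' - q) := by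
    have : γ ^ p * β ^ q = (γ ^ p' * β ^ (q' - q)) * β ^ q := by
      rw [mul_assoc, ← pow_add, Nat.sub_add_cancel hqq', h]
    exact mul_right_cancel₀ (pow_ne_zero _ hβ0) this
  rcases Nat.eq_or_lt_of_le hqq' with rfl|hlt
  · simp only [Nat.sub_self, pow_zero, mul_one] at hcan
    exact ⟨myPow_inj hγ0 hγ hcan, rfl⟩
  · exfalso
    rcases le_or_gt p' p with hp|hp
    · have h1 : γ ^ p' * γ ^ (p - p') = γ ^ p' * β ^ (q' - q) := by
        rw [← pow_add, Nat.add_sub_cancel' hp, hcan]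
      exact no_cross hγ hβγ (p - p') (by omega) (mul_left_cancel₀ (pow_ne_zero _ hγ0) h1)
    · have h1 : γ ^ p * (γ ^ (p' - p) * β ^ (q' - q)) = γ ^ p * 1 := by
        rw [mul_one, ← mul_assoc, ← pow_add, Nat.add_sub_cancel' hp.le, hcan]
      have h2 := mul_left_cancel₀ (pow_ne_zero _ hγ0) h1
      have h3 : γ ^ (p' - p) * β ^ (q' - q) < 1 := by
        calc γ ^ (p' - p) * β ^ (q' - q) ≤ γ ^ (p' - p) * 1 :=
              mul_le_mul_right (pow_le_one' hβ.le _) _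
          _ = γ ^ (p' - p) := mul_one _
          _ < 1 := myPow_lt_one hγ (by omega)
      exact h3.ne h2

end GammaLemmas

namespace ValuationSubring
variable {K : Type*} [Field K] (A : ValuationSubring K)

lemma zero_mem_nonunits' : (0 : K) ∈ A.nonunits := by
  rw [mem_nonunits_iff, map_zero]
  exact zero_lt_one

lemma nonunits_add' {x y : K} (hx : x ∈ A.nonunits) (hy : y ∈ A.nonunits) :
    x + y ∈ A.nonunits := by
  rw [mem_nonunits_iff] at *
  exact lt_of_le_of_lt (A.valuation.map_add x y) (max_lt hx hy)

lemma nonunits_mul_mem' {x y : K} (hx : x ∈ A.nonunits) (hy : y ∈ A) :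
    x * y ∈ A.nonunits := by
  rw [mem_nonunits_iff] at *
  calc A.valuation (x * y) = A.valuation x * A.valuation y := map_mul _ _ _
    _ ≤ A.valuation x * 1 := mul_le_mul_right ((A.valuation_le_one_iff y).2 hy) _
    _ = A.valuation x := mul_one _
    _ < 1 := hx

lemma nonunits_sum' {ι : Type*} (s : Finset ι) (f : ι → K)
    (h : ∀ i ∈ s, f i ∈ A.nonunits) : (∑ i ∈ s, f i) ∈ A.nonunits :=
  Finset.sum_induction f (· ∈ A.nonunits) (fun _ _ => A.nonunits_add') A.zero_mem_nonunits' h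

lemma val_eq_one_of_not_mem_nonunits {x : K} (hx : x ∈ A) (h : x ∉ A.nonunits) :
    A.valuation x = 1 :=
  le_antisymm ((A.valuation_le_one_iff x).2 hx)
    (not_lt.mp (fun hlt => h (A.mem_nonunits_iff.mpr hlt)))

end ValuationSubring

section Rep
variable {K : Type*} [Field K] (R₀ : Subring K) (a t : K)

/-- `x` is a sum of monomials `c * a^i * t^j` with `c ∈ R₀`, `i : ℕ`, `j : ℤ`. -/
def MRep (x : K) : Prop :=
  ∃ (s : Finset (ℕ × ℤ)) (d : ℕ × ℤ → K), (∀ ij ∈ s, d ij ∈ R₀) ∧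
    x = ∑ ij ∈ s, d ij * a ^ ij.1 * t ^ ij.2

variable {R₀ a t}

lemma MRep.zero : MRep R₀ a t 0 := ⟨∅, fun _ => 0, by simp, by simp⟩

lemma MRep.single {c : K} (hc : c ∈ R₀) (i : ℕ) (j : ℤ) : MRep R₀ a t (c * a ^ i * t ^ j) :=
  ⟨{(i, j)}, fun _ => c, by simp [hc], by simp⟩

lemma MRep.add {x y : K} (hx : MRep R₀ a t x) (hy : MRep R₀ a t y) : MRep R₀ a t (x + y) := by
  classical
  obtain ⟨s₁, d₁, hd₁, rfl⟩ := hx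
  obtain ⟨s₂, d₂, hd₂, rfl⟩ := hy
  refine ⟨s₁ ∪ s₂, fun ij => (if ij ∈ s₁ then d₁ ij else 0) + (if ij ∈ s₂ then d₂ ij else 0),
    fun ij _ => add_mem (by split <;> [exact hd₁ _ ‹_›; exact zero_mem _])
      (by split <;> [exact hd₂ _ ‹_›; exact zero_mem _]), ?_⟩
  have e1 : ∀ (s' : Finset (ℕ × ℤ)) (d : ℕ × ℤ → K), s' ⊆ s₁ ∪ s₂ →
      ∑ ij ∈ s', d ij * a ^ ij.1 * t ^ ij.2
        = ∑ ij ∈ s₁ ∪ s₂, (if ij ∈ s' then d ij else 0) * a ^ ij.1 * t ^ ij.2 := by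
    intro s' d hs'
    have h2 : ∀ ij ∈ s₁ ∪ s₂, (if ij ∈ s' then d ij else 0) * a ^ ij.1 * t ^ ij.2
        = if ij ∈ s' then d ij * a ^ ij.1 * t ^ ij.2 else 0 := by
      intro ij _; split <;> simp
    rw [Finset.sum_congr rfl h2, Finset.sum_ite_mem, Finset.inter_eq_right.mpr hs']
  rw [e1 s₁ d₁ Finset.subset_union_left, e1 s₂ d₂ Finset.subset_union_right,
    ← Finset.sum_add_distrib]
  exact Finset.sum_congr rfl (fun x hx => by ring)

lemma MRep.neg {x : K} (hx : MRep R₀ a t x) : MRep R₀ a t (-x) := by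
  obtain ⟨s, d, hd, rfl⟩ := hx
  exact ⟨s, fun ij => -d ij, fun ij h => neg_mem (hd ij h), by
    rw [← Finset.sum_neg_distrib]; exact Finset.sum_congr rfl (fun x hx => by ring)⟩

lemma MRep.monomul (ht : t ≠ 0) {c : K} (hc : c ∈ R₀) (i : ℕ) (j : ℤ) {x : K}
    (hx : MRep R₀ a t x) : MRep R₀ a t (c * a ^ i * t ^ j * x) := by
  obtain ⟨s, d, hd, rfl⟩ := hx
  refine ⟨s.image (fun pq => (pq.1 + i, pq.2 + j)), fun pq => c * d (pq.1 - i, pq.2 - j),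
    ?_, ?_⟩
  · intro ij hij
    obtain ⟨uv, huv, rfl⟩ := Finset.mem_image.mp hij
    simpa using mul_mem hc (hd _ huv)
  · rw [Finset.sum_image (by intro p _ q _ h; simpa [Prod.ext_iff] using h)]
    rw [Finset.mul_sum]
    refine Finset.sum_congr rfl (fun uv huv => ?_)
    simp only [Nat.add_sub_cancel, add_sub_cancel_right]
    rw [pow_add, zpow_add₀ ht]
    ring

lemma MRep.of_mem_closure (ht : t ≠ 0) {x : K}
    (hx : x ∈ Subring.closure ((R₀ : Set K) ∪ {a, t, t⁻¹})) : MRep R₀ a t x := by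
  have hmem : ∀ c ∈ R₀, MRep R₀ a t c := fun c hc => by
    simpa using MRep.single (a := a) (t := t) hc 0 0
  have ha : MRep R₀ a t a := by
    simpa using MRep.single (a := a) (t := t) (one_mem R₀) 1 0
  have htm : MRep R₀ a t t := by
    simpa using MRep.single (a := a) (t := t) (one_mem R₀) 0 1
  have hti : MRep R₀ a t t⁻¹ := by
    simpa using MRep.single (a := a) (t := t) (one_mem R₀) 0 (-1)
  induction hx using Subring.closure_induction with
  | mem x hxg =>
    rcases hxg with hx | hx
    · exact hmem x hx
    · simp only [Set.mem_insert_iff, Set.mem_singleton_iff] at hx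
      rcases hx with rfl | rfl | rfl
      exacts [ha, htm, hti]
  | zero => exact MRep.zero
  | one => exact hmem 1 (one_mem R₀)
  | add x y _ _ hx hy => exact hx.add hy
  | neg x _ hx => exact hx.neg
  | mul x y _ _ hx hy =>
    obtain ⟨s, d, hd, rfl⟩ := hx
    rw [Finset.sum_mul]
    refine Finset.sum_induction _ (MRep R₀ a t) (fun _ _ h1 h2 => h1.add h2) MRep.zero ?_
    intro ij hij
    exact (hy.monomul ht (hd ij hij) ij.1 ij.2)

end Rep

section Core
open ValuationSubring

variable {K : Type*} [Field K]

lemma gamma_lt_of_mul_inv_lt_one {Γ : Type*} [LinearOrderedCommGroupWithZero Γ]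
    {x y : Γ} (hy : y ≠ 0) (h : x * y⁻¹ < 1) : x < y := by
  rw [mul_comm] at h
  exact (inv_mul_lt_one₀ (zero_lt_iff.mpr hy)).mp h

lemma core_not_unit (W W'' : ValuationSubring K) (hle : W ≤ W'')
    (R₀ : Subring K) (hR₀ : ∀ x ∈ R₀, x ∈ W)
    (hc : ∀ x ∈ R₀, x ∈ W.nonunits → x ∈ W''.nonunits)
    {a b : K} (ha0 : a ≠ 0) (hb0 : b ≠ 0)
    (haW : a ∈ W.nonunits) (hbWmem : b ∈ W)
    (hanu : a ∉ W''.nonunits) (hbnu : b ∉ W''.nonunits)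
    (hab : ∀ n : ℕ, W.valuation b < W.valuation a ^ n)
    (α : ℕ) {x : K}
    (hx : x ∈ Subring.closure ((R₀ : Set K) ∪ {a, a ^ α * b⁻¹, (a ^ α * b⁻¹)⁻¹})) :
    x * a ≠ 1 := by
  classical
  intro heq
  set t := a ^ α * b⁻¹ with hts
  have ht0 : t ≠ 0 := mul_ne_zero (pow_ne_zero _ ha0) (inv_ne_zero hb0)
  obtain ⟨s, d, hd, hxrep⟩ := MRep.of_mem_closure ht0 hx
  set v := W.valuation with hv
  set γ := v a with hγ
  set β := v b with hβ
  have hγ0 : γ ≠ 0 := v.ne_zero_iff.mpr ha0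
  have hβ0 : β ≠ 0 := v.ne_zero_iff.mpr hb0
  have hγ1 : γ < 1 := W.mem_nonunits_iff.mp haW
  have haWmem : a ∈ W := ValuationSubring.nonunits_subset haW
  have haW'' : a ∈ W'' := hle haWmem
  have hbW'' : b ∈ W'' := hle hbWmem
  -- the valuation of W'' takes value 1 on a and b
  have hv''a : W''.valuation a = 1 := W''.val_eq_one_of_not_mem_nonunits haW'' hanu
  have hv''b : W''.valuation b = 1 := W''.val_eq_one_of_not_mem_nonunits hbW'' hbnu
  -- depth of elements of the maximal ideal of W''
  have depth : ∀ z ∈ W''.nonunits, ∀ p q : ℕ, v z < γ ^ p * β ^ q := by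
    intro z hz p q
    have h1 : W''.valuation (z * (a ^ p * b ^ q)⁻¹) < 1 := by
      rw [map_mul, map_inv₀, map_mul, map_pow, map_pow, hv''a, hv''b]
      simpa using W''.mem_nonunits_iff.mp hz
    have h2 : z * (a ^ p * b ^ q)⁻¹ ∈ W.nonunits :=
      (ValuationSubring.nonunits_le_nonunits.mpr hle) (W''.mem_nonunits_iff.mpr h1)
    have h3 : v (z * (a ^ p * b ^ q)⁻¹) < 1 := W.mem_nonunits_iff.mp h2
    rw [map_mul, map_inv₀, map_mul, map_pow, map_pow] at h3
    rw [hγ, hβ]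
    exact gamma_lt_of_mul_inv_lt_one (mul_ne_zero (pow_ne_zero _ hγ0) (pow_ne_zero _ hβ0)) h3
  -- exponents
  set M := s.sup (fun ij => (-ij.2).toNat) with hM
  set N := s.sup (fun ij => ij.2.toNat) with hN
  have hbound : ∀ ij ∈ s, 0 ≤ ij.2 + M ∧ ij.2 ≤ (N : ℤ) := by
    intro ij hij
    constructor
    · have h1 : (-ij.2).toNat ≤ M := Finset.le_sup (f := fun ij => (-ij.2).toNat) hij
      have h2 : -ij.2 ≤ ((-ij.2).toNat : ℤ) := Int.self_le_toNat _
      omega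
    · have h1 : ij.2.toNat ≤ N := Finset.le_sup (f := fun ij => ij.2.toNat) hij
      have h2 : ij.2 ≤ (ij.2.toNat : ℤ) := Int.self_le_toNat _
      omega
  set p : ℕ × ℤ → ℕ := fun ij => 1 + ij.1 + α * (ij.2 + M).toNat with hp
  set q : ℕ × ℤ → ℕ := fun ij => (N - ij.2).toNat with hq
  set F : ℕ × ℤ → K := fun ij => d ij * a ^ p ij * b ^ q ij with hF
  -- the key algebraic identity
  have e_t : ∀ j : ℤ, t ^ j = a ^ ((α : ℤ) * j) * b ^ (-j) := by
    intro j
    rw [hts, mul_zpow, inv_zpow, ← zpow_neg, ← zpow_natCast a α, ← zpow_mul]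
  have term_eq : ∀ ij ∈ s,
      (a ^ (α * M) * b ^ N * a) * (d ij * a ^ ij.1 * t ^ ij.2) = F ij := by
    intro ij hij
    obtain ⟨hjM, hjN⟩ := hbound ij hij
    have ec1 : ((p ij : ℕ) : ℤ) = ((α * M : ℕ) : ℤ) + ij.1 + (α : ℤ) * ij.2 + 1 := by
      rw [hp]
      push_cast [Int.toNat_of_nonneg hjM]
      ring
    have ec2 : ((q ij : ℕ) : ℤ) = (N : ℤ) - ij.2 := Int.toNat_of_nonneg (by omega)
    calc (a ^ (α * M) * b ^ N * a) * (d ij * a ^ ij.1 * t ^ ij.2)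
        = d ij * (a ^ ((α * M : ℕ) : ℤ) * a ^ ((ij.1 : ℕ) : ℤ) * a ^ ((α : ℤ) * ij.2)
            * a ^ (1 : ℤ)) * (b ^ ((N : ℕ) : ℤ) * b ^ (-ij.2)) := by
          rw [e_t ij.2, zpow_natCast, zpow_natCast, zpow_natCast, zpow_one]
          ring
      _ = d ij * a ^ (((α * M : ℕ) : ℤ) + ij.1 + (α : ℤ) * ij.2 + 1) * b ^ ((N : ℤ) - ij.2) := by
          rw [zpow_add₀ ha0, zpow_add₀ ha0, zpow_add₀ ha0, sub_eq_add_neg, zpow_add₀ hb0]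
          try push_cast
          try ring
      _ = F ij := by
          rw [hF]
          simp only []
          rw [← zpow_natCast a (p ij), ← zpow_natCast b (q ij), ec1, ec2]
  have key : a ^ (α * M) * b ^ N = ∑ ij ∈ s, F ij := by
    have h0 : a ^ (α * M) * b ^ N = (a ^ (α * M) * b ^ N * a) * x := by
      rw [mul_assoc, mul_comm a x, heq, mul_one]
    rw [h0, hxrep, Finset.mul_sum]
    exact Finset.sum_congr rfl term_eq
  -- injectivity of exponent pairs
  have pinj : ∀ ij ∈ s, ∀ ij' ∈ s, p ij = p ij' → q ij = q ij' → ij = ij' := by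
    intro ij hij ij' hij' hpe hqe
    obtain ⟨h1, h2⟩ := hbound ij hij
    obtain ⟨h1', h2'⟩ := hbound ij' hij'
    simp only [hq] at hqe
    have ej : ij.2 = ij'.2 := by omega
    have ei : ij.1 = ij'.1 := by
      simp only [hp, ej] at hpe
      omega
    exact Prod.ext ei ej
  have hne_main : ∀ ij ∈ s, ¬(p ij = α * M ∧ q ij = N) := by
    intro ij hij ⟨hp1, hq1⟩
    obtain ⟨h1, h2⟩ := hbound ij hij
    simp only [hq] at hq1
    have ej : ij.2 = 0 := by omega
    simp only [hp, ej, zero_add, Int.toNat_natCast] at hp1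
    omega
  -- splitting the sum
  set s₂ := s.filter (fun ij => d ij ∈ W''.nonunits) with hs₂
  set s₁ := s.filter (fun ij => ¬(d ij ∈ W''.nonunits)) with hs₁
  have hsplit : (∑ ij ∈ s₂, F ij) + (∑ ij ∈ s₁, F ij) = ∑ ij ∈ s, F ij :=
    Finset.sum_filter_add_sum_filter_not s _ F
  have hB : (∑ ij ∈ s₂, F ij) ∈ W''.nonunits := by
    apply W''.nonunits_sum'
    intro ij hij
    have hdij : d ij ∈ W''.nonunits := (Finset.mem_filter.mp hij).2
    exact W''.nonunits_mul_mem' (W''.nonunits_mul_mem' hdij (pow_mem haW'' _)) (pow_mem hbW'' _)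
  have hE : (a ^ (α * M) * b ^ N) ∉ W''.nonunits := by
    rw [ValuationSubring.mem_nonunits_iff, map_mul, map_pow, map_pow, hv''a, hv''b]
    simp
  -- the terms of s₁ have value γ^p * β^q
  have hvF : ∀ ij ∈ s₁, v (F ij) = γ ^ p ij * β ^ q ij := by
    intro ij hij
    obtain ⟨hijs, hdij⟩ := Finset.mem_filter.mp hij
    have hdW : d ij ∈ W := hR₀ _ (hd ij hijs)
    have hdnu : d ij ∉ W.nonunits := fun h => hdij (hc _ (hd ij hijs) h)
    rw [hF]
    simp only []
    rw [map_mul, map_mul, map_pow, map_pow, W.val_eq_one_of_not_mem_nonunits hdW hdnu, one_mul,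
      ← hγ, ← hβ]
  by_cases hs₁e : s₁ = ∅
  · rw [hs₁e, Finset.sum_empty, add_zero] at hsplit
    rw [key, ← hsplit] at hE
    exact hE hB
  · obtain ⟨ij₀, hij₀, hmax⟩ :=
      Finset.exists_max_image s₁ (fun ij => v (F ij)) (Finset.nonempty_of_ne_empty hs₁e)
    have hvF₀ : v (F ij₀) = γ ^ p ij₀ * β ^ q ij₀ := hvF ij₀ hij₀
    have hvF₀0 : v (F ij₀) ≠ 0 := by
      rw [hvF₀]; exact mul_ne_zero (pow_ne_zero _ hγ0) (pow_ne_zero _ hβ0)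
    have hvA : v (∑ ij ∈ s₁, F ij) = v (F ij₀) := by
      rw [← Finset.add_sum_erase _ F hij₀]
      apply Valuation.map_add_eq_of_lt_left
      apply Valuation.map_sum_lt _ hvF₀0
      intro ij hij
      have hijs₁ : ij ∈ s₁ := Finset.mem_of_mem_erase hij
      refine lt_of_le_of_ne (hmax ij hijs₁) (fun hveq => ?_)
      rw [hvF ij hijs₁, hvF₀] at hveq
      obtain ⟨hpe, hqe⟩ := exp_pair_inj hγ0 hβ0 hγ1 hab hveq
      exact (Finset.ne_of_mem_erase hij) (pinj ij (Finset.mem_of_mem_filter _ hijs₁) ij₀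
        (Finset.mem_of_mem_filter _ hij₀) hpe hqe)
    have hvB : v (∑ ij ∈ s₂, F ij) < v (F ij₀) := by
      rw [hvF₀]
      exact depth _ hB (p ij₀) (q ij₀)
    have hvE : v (a ^ (α * M) * b ^ N) = v (F ij₀) := by
      rw [key, ← hsplit]
      rw [Valuation.map_add_eq_of_lt_right _ (by rw [hvA]; exact hvB)]
      exact hvA
    rw [map_mul, map_pow, map_pow, ← hγ, ← hβ, hvF₀] at hvE
    obtain ⟨hpe, hqe⟩ := exp_pair_inj hγ0 hβ0 hγ1 hab hvE
    exact hne_main ij₀ (Finset.mem_of_mem_filter _ hij₀) ⟨hpe.symm, hqe.symm⟩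

end Core

section Zconstr
open ValuationSubring

variable {K : Type*} [Field K]

lemma exists_Z (W W'' : ValuationSubring K) (hle : W ≤ W'')
    (R₀ : Subring K) (hR₀ : ∀ x ∈ R₀, x ∈ W)
    (hc : ∀ x ∈ R₀, x ∈ W.nonunits → x ∈ W''.nonunits)
    {a b : K} (ha0 : a ≠ 0) (hb0 : b ≠ 0)
    (haW : a ∈ W.nonunits) (hbWmem : b ∈ W)
    (hanu : a ∉ W''.nonunits) (hbnu : b ∉ W''.nonunits)
    (hab : ∀ n : ℕ, W.valuation b < W.valuation a ^ n)
    (α : ℕ) :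
    ∃ Z : ValuationSubring K, (∀ x ∈ R₀, x ∈ Z) ∧ ∀ k : ℕ, (a ^ k * b⁻¹ ∈ Z ↔ α ≤ k) := by
  set t := a ^ α * b⁻¹ with hts
  have ht0 : t ≠ 0 := mul_ne_zero (pow_ne_zero _ ha0) (inv_ne_zero hb0)
  set S := Subring.closure ((R₀ : Set K) ∪ {a, t, t⁻¹}) with hS
  have haS : a ∈ S := Subring.subset_closure (Or.inr (by simp))
  have htS : t ∈ S := Subring.subset_closure (Or.inr (by simp))
  have htiS : t⁻¹ ∈ S := Subring.subset_closure (Or.inr (by simp))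
  have hR₀S : ∀ x ∈ R₀, x ∈ S := fun x hx => Subring.subset_closure (Or.inl hx)
  have hproper : Ideal.span {(⟨a, haS⟩ : S)} ≠ ⊤ := by
    intro htop
    rw [Ideal.eq_top_iff_one, Ideal.mem_span_singleton'] at htop
    obtain ⟨c, hc1⟩ := htop
    refine core_not_unit W W'' hle R₀ hR₀ hc ha0 hb0 haW hbWmem hanu hbnu hab α
      (x := (c : K)) c.2 ?_
    have := congrArg (Subtype.val) hc1
    simpa using this
  obtain ⟨Mx, hMx, hMxle⟩ := Ideal.exists_le_maximal _ hproper
  obtain ⟨Z, hZ1, hZ2⟩ := (LocalSubring.ofPrime S Mx).exists_le_valuationSubring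
  have hSZ : ∀ x ∈ S, x ∈ Z := fun x hx => hZ1 (LocalSubring.le_ofPrime S Mx hx)
  have hAnonunit : ∀ y ∈ Z, a * y ≠ 1 := by
    intro y hy hay
    have huZ : IsUnit (Subring.inclusion hZ1
        ((algebraMap S (LocalSubring.ofPrime S Mx).toSubring) ⟨a, haS⟩)) := by
      rw [isUnit_iff_exists_inv]
      refine ⟨⟨y, hy⟩, Subtype.ext ?_⟩
      exact hay
    have hu2 := hZ2.1 _ huZ
    have := (IsLocalization.AtPrime.isUnit_to_map_iff
      (LocalSubring.ofPrime S Mx).toSubring Mx (⟨a, haS⟩ : S)).mp hu2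
    exact this (hMxle (Ideal.subset_span rfl))
  have hmemZ : ∀ k : ℕ, α ≤ k → a ^ k * b⁻¹ ∈ Z := by
    intro k hk
    have he : a ^ k * b⁻¹ = a ^ (k - α) * t := by
      rw [hts, ← mul_assoc, ← pow_add]
      congr 2
      omega
    rw [he]
    exact mul_mem (pow_mem (hSZ a haS) _) (hSZ t htS)
  have hnmemZ : ∀ k : ℕ, k < α → a ^ k * b⁻¹ ∉ Z := by
    intro k hk hmem
    refine hAnonunit (t⁻¹ * a ^ (α - k - 1) * (a ^ k * b⁻¹))
      (mul_mem (mul_mem (hSZ _ htiS) (pow_mem (hSZ a haS) _)) hmem) ?_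
    calc a * (t⁻¹ * a ^ (α - k - 1) * (a ^ k * b⁻¹))
        = t⁻¹ * (a ^ (α - k - 1 + (k + 1)) * b⁻¹) := by rw [pow_add]; ring
      _ = t⁻¹ * t := by rw [show α - k - 1 + (k + 1) = α from by omega, ← hts]
      _ = 1 := inv_mul_cancel₀ ht0
  exact ⟨Z, fun x hx => hSZ x (hR₀S x hx),
    fun k => ⟨fun h => not_lt.mp (fun hlt => hnmemZ k hlt h), hmemZ k⟩⟩

end Zconstr

section OfPrime
open ValuationSubring

variable {K : Type*} [Field K]

lemma mem_nonunits_ofPrime_iff (V : ValuationSubring K) (P : Ideal V) [P.IsPrime] (x : V) :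
    (x : K) ∈ (V.ofPrime P).nonunits ↔ x ∈ P := by
  have h1 : (x : K) ∈ (V.ofPrime P).nonunits ↔
      (⟨(x : K), V.le_ofPrime P x.2⟩ : V.ofPrime P) ∈ IsLocalRing.maximalIdeal (V.ofPrime P) :=
    ValuationSubring.coe_mem_nonunits_iff (A := V.ofPrime P)
      (a := ⟨(x : K), V.le_ofPrime P x.2⟩)
  have h2 := V.idealOfLE_ofPrime P
  have h3 : x ∈ P ↔ x ∈ V.idealOfLE (V.ofPrime P) (V.le_ofPrime P) := by rw [h2]
  rw [h1, h3, ValuationSubring.idealOfLE, Ideal.mem_comap]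
  rfl

end OfPrime

/-- The Zariski topology on the set of valuation subrings of a field `K`. -/
instance zariskiTopology (K : Type*) [Field K] : TopologicalSpace (ValuationSubring K) :=
  TopologicalSpace.generateFrom {U | ∃ x : K, U = {V : ValuationSubring K | x ∈ V}}

/-- The Zariski space `Zar(D)`: valuation subrings of `K` containing the image of `D`. -/
def zarSet (D K : Type*) [CommRing D] [Field K] [Algebra D K] : Set (ValuationSubring K) :=
  {V | ∀ d : D, algebraMap D K d ∈ V}

section ThreePrimes
open ValuationSubring TopologicalSpace

variable {D K : Type*} [CommRing D] [Field K] [Algebra D K]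

lemma isOpen_basic (x : K) : IsOpen {Y : ValuationSubring K | x ∈ Y} :=
  TopologicalSpace.GenerateOpen.basic _ ⟨x, rfl⟩

lemma three_primes_not_noeth (V : ValuationSubring K) (hV : V ∈ zarSet D K)
    (g : D →+* V) (hg : ∀ d : D, (g d : K) = algebraMap D K d)
    (p₀ p₁ p₂ : Ideal V) [hp₀ : p₀.IsPrime] [hp₁ : p₁.IsPrime] [hp₂ : p₂.IsPrime]
    (h01 : p₀ < p₁) (h12 : p₁ < p₂)
    (hcomap : p₂.comap g = p₀.comap g) :
    ¬ NoetherianSpace (zarSet D K) := by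
  intro hNoeth
  set W := V.ofPrime p₂ with hW
  set W' := V.ofPrime p₁ with hW'
  set W'' := V.ofPrime p₀ with hW''
  have hWW' : W ≤ W' := V.ofPrime_le_of_le p₁ p₂ h12.le
  have hW'W'' : W' ≤ W'' := V.ofPrime_le_of_le p₀ p₁ h01.le
  have hle : W ≤ W'' := hWW'.trans hW'W''
  -- choose elements
  obtain ⟨ta, hta2, hta1⟩ := SetLike.exists_of_lt h12
  obtain ⟨tb, htb1, htb0⟩ := SetLike.exists_of_lt h01
  set a := (ta : K) with haeq
  set b := (tb : K) with hbeq
  have haW : a ∈ W.nonunits := (mem_nonunits_ofPrime_iff V p₂ ta).mpr hta2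
  have haW' : a ∉ W'.nonunits := fun h => hta1 ((mem_nonunits_ofPrime_iff V p₁ ta).mp h)
  have haW'' : a ∉ W''.nonunits := fun h =>
    hta1 (h01.le ((mem_nonunits_ofPrime_iff V p₀ ta).mp h))
  have hbW' : b ∈ W'.nonunits := (mem_nonunits_ofPrime_iff V p₁ tb).mpr htb1
  have hbW'' : b ∉ W''.nonunits := fun h => htb0 ((mem_nonunits_ofPrime_iff V p₀ tb).mp h)
  have hbW : b ∈ W.nonunits := (mem_nonunits_ofPrime_iff V p₂ tb).mpr (h12.le htb1)
  have ha0 : a ≠ 0 := by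
    intro h
    exact hta1 (by rw [show ta = 0 from Subtype.ext h]; exact zero_mem p₁)
  have hb0 : b ≠ 0 := by
    intro h
    exact htb0 (by rw [show tb = 0 from Subtype.ext h]; exact zero_mem p₀)
  have haWm : a ∈ W := ValuationSubring.nonunits_subset haW
  have hbWm : b ∈ W := ValuationSubring.nonunits_subset hbW
  have hv'a : W'.valuation a = 1 := W'.val_eq_one_of_not_mem_nonunits (hWW' haWm) haW'
  have hab : ∀ n : ℕ, W.valuation b < W.valuation a ^ n := by
    intro n
    have h1 : b * (a⁻¹) ^ n ∈ W'.nonunits := by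
      rw [ValuationSubring.mem_nonunits_iff, map_mul, map_pow, map_inv₀, hv'a]
      simpa using W'.mem_nonunits_iff.mp hbW'
    have h2 : b * (a⁻¹) ^ n ∈ W.nonunits :=
      (ValuationSubring.nonunits_le_nonunits.mpr hWW') h1
    have h3 := W.mem_nonunits_iff.mp h2
    rw [map_mul, map_pow, map_inv₀, inv_pow] at h3
    exact gamma_lt_of_mul_inv_lt_one (pow_ne_zero _ (W.valuation.ne_zero_iff.mpr ha0)) h3
  set R₀ := (algebraMap D K).range with hR₀def
  have hR₀ : ∀ x ∈ R₀, x ∈ W := by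
    rintro x ⟨d, rfl⟩
    exact V.le_ofPrime p₂ (hV d)
  have hc : ∀ x ∈ R₀, x ∈ W.nonunits → x ∈ W''.nonunits := by
    rintro x ⟨d, rfl⟩ hx
    have hxV : algebraMap D K d ∈ V := hV d
    have h1 : g d ∈ p₂ := by
      have := (mem_nonunits_ofPrime_iff V p₂ (g d)).mpr
      rw [← hg d] at hx
      exact (mem_nonunits_ofPrime_iff V p₂ (g d)).mp hx
    have h2 : g d ∈ p₀ := by
      have : d ∈ p₂.comap g := h1
      rw [hcomap] at this
      exact this
    have := (mem_nonunits_ofPrime_iff V p₀ (g d)).mpr h2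
    rwa [hg d] at this
  -- the family of valuation rings
  have hZex := fun α => exists_Z W W'' hle R₀ hR₀ hc ha0 hb0 haW hbWm haW'' hbW'' hab α
  choose Z hZR₀ hZiff using hZex
  have hZzar : ∀ α, Z α ∈ zarSet D K := fun α d => hZR₀ α _ ⟨d, rfl⟩
  -- the ascending chain of opens
  have hopen : ∀ n : ℕ, IsOpen ((Subtype.val : zarSet D K → ValuationSubring K) ⁻¹'
      (⋃ k ∈ Set.Iic n, {Y : ValuationSubring K | a ^ k * b⁻¹ ∈ Y})) := by
    intro n
    refine IsOpen.preimage continuous_subtype_val ?_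
    exact isOpen_biUnion (fun k _ => isOpen_basic _)
  set O : ℕ → Opens (zarSet D K) := fun n => ⟨_, hopen n⟩ with hO
  have hOmono : StrictMono O := by
    have hmem : ∀ n, (⟨Z (n + 1), hZzar (n + 1)⟩ : zarSet D K) ∈ (O (n + 1) : Set (zarSet D K)) := by
      intro n
      simp only [hO, Opens.coe_mk, Set.mem_preimage, Set.mem_iUnion]
      exact ⟨n + 1, Set.mem_Iic.mpr le_rfl, (hZiff (n + 1) (n + 1)).mpr le_rfl⟩
    have hnmem : ∀ n, (⟨Z (n + 1), hZzar (n + 1)⟩ : zarSet D K) ∉ (O n : Set (zarSet D K)) := by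
      intro n hmem'
      simp only [hO, Opens.coe_mk, Set.mem_preimage, Set.mem_iUnion] at hmem'
      obtain ⟨k, hk, hmemk⟩ := hmem'
      have := (hZiff (n + 1) k).mp hmemk
      exact absurd (this.trans (Set.mem_Iic.mp hk)) (by omega)
    apply strictMono_nat_of_lt_succ
    intro n
    rw [lt_iff_le_and_ne]
    constructor
    · intro x hx
      exact Set.preimage_mono (Set.biUnion_subset_biUnion_left
        (Set.Iic_subset_Iic.mpr (Nat.le_succ n))) hx
    · intro hEq
      exact hnmem n (hEq ▸ hmem n)
  -- contradiction with well-foundedness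
  have hwf : WellFounded ((· > ·) : Opens (zarSet D K) → Opens (zarSet D K) → Prop) :=
    (hNoeth : WellFoundedGT (Opens (zarSet D K))).wf
  obtain ⟨m, ⟨n, rfl⟩, hmin⟩ := hwf.has_min (Set.range O) ⟨O 0, 0, rfl⟩
  exact hmin (O (n + 1)) ⟨n + 1, rfl⟩ (hOmono (Nat.lt_succ_self n))

end ThreePrimes

section Final
open ValuationSubring TopologicalSpace

lemma cast_le_two_mul {d : WithBot ℕ∞} {x y : ℕ}
    (hx : ((x : ℕ) : WithBot ℕ∞) ≤ d) (hy : y ≤ 2 * x) :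
    ((y : ℕ) : WithBot ℕ∞) ≤ 2 * d := by
  induction d using WithBot.recBotCoe with
  | bot =>
    exfalso
    have : ((x : ℕ∞) : WithBot ℕ∞) ≤ ⊥ := by exact_mod_cast hx
    simpa using this
  | coe d' =>
    have h0 : (x : ℕ∞) ≤ d' := by
      have : ((x : ℕ∞) : WithBot ℕ∞) ≤ (d' : WithBot ℕ∞) := by
        exact_mod_cast hx
      exact WithBot.coe_le_coe.mp this
    have h1 : (y : ℕ∞) ≤ 2 * d' := by
      calc (y : ℕ∞) ≤ ((2 * x : ℕ) : ℕ∞) := by exact_mod_cast hy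
        _ = 2 * (x : ℕ∞) := by push_cast; ring
        _ ≤ 2 * d' := mul_le_mul_right h0 2
    have h2 : ((y : ℕ∞) : WithBot ℕ∞) ≤ ((2 * d' : ℕ∞) : WithBot ℕ∞) :=
      WithBot.coe_le_coe.mpr h1
    have h3 : ((2 * d' : ℕ∞) : WithBot ℕ∞) = 2 * (d' : WithBot ℕ∞) := by
      rw [WithBot.coe_mul]
      try rw [WithBot.coe_ofNat]
      try norm_cast
    rw [h3] at h2
    exact_mod_cast h2

theorem stmt6 (D K : Type*) [CommRing D] [IsDomain D] [Field K] [Algebra D K]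
    [IsFractionRing D K] (h : TopologicalSpace.NoetherianSpace (zarSet D K)) :
    ∀ V ∈ zarSet D K, ringKrullDim V ≤ 2 * ringKrullDim D := by
  intro V hV
  set g : D →+* V := (algebraMap D K).codRestrict V.toSubring hV with hgdef
  have hg : ∀ d : D, (g d : K) = algebraMap D K d := fun d => rfl
  -- primes of V contracting to ⊥ are ⊥
  have hbot : ∀ Q : Ideal V, Q.comap g = ⊥ → Q = ⊥ := by
    intro Q hQ
    rw [eq_bot_iff]
    intro x hx
    obtain ⟨dn, de, hde, hrep⟩ := IsFractionRing.div_surjective (A := D) ((x : K))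
    have hfe0 : algebraMap D K de ≠ 0 :=
      IsFractionRing.to_map_ne_zero_of_mem_nonZeroDivisors hde
    have hnum : algebraMap D K dn = (x : K) * algebraMap D K de := (div_eq_iff hfe0).mp hrep
    have hgd : g dn = x * g de := by
      apply Subtype.ext
      rw [hg dn, hnum]
      push_cast [hg de]
      rfl
    have hdn : dn ∈ Q.comap g := by
      rw [Ideal.mem_comap, hgd]
      exact Q.mul_mem_right (g de) hx
    rw [hQ, Ideal.mem_bot] at hdn
    have : (x : K) * algebraMap D K de = 0 := by
      rw [← hnum, hdn, map_zero]
    rw [Ideal.mem_bot]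
    apply Subtype.ext
    simpa [hfe0] using this
  -- asIdeal of < is <
  have hltI : ∀ {x y : PrimeSpectrum V}, x < y → x.asIdeal < y.asIdeal := by
    intro x y hxy
    rw [lt_iff_le_and_ne] at hxy ⊢
    exact ⟨hxy.1, fun he => hxy.2 (PrimeSpectrum.ext he)⟩
  have main : ∀ ℓ : LTSeries (PrimeSpectrum V),
      ((ℓ.length : ℕ) : WithBot ℕ∞) ≤ 2 * ringKrullDim D := by
    intro ℓ
    set m := ℓ.length with hm
    set e : ℕ → Fin (m + 1) := fun i => ⟨min i m, by omega⟩ with he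
    set c : ℕ → PrimeSpectrum D := fun i => PrimeSpectrum.comap g (ℓ (e i)) with hc
    have hVmono : ∀ i j : ℕ, i ≤ j → ℓ (e i) ≤ ℓ (e j) := by
      intro i j hij
      exact ℓ.monotone (by simp only [he, Fin.mk_le_mk]; omega)
    have hVstrict : ∀ i j : ℕ, i < j → j ≤ m → ℓ (e i) < ℓ (e j) := by
      intro i j hij hj
      exact ℓ.strictMono (by simp only [he, Fin.mk_lt_mk]; omega)
    have hcmono : ∀ i j : ℕ, i ≤ j → c i ≤ c j := by
      intro i j hij
      show (c i).asIdeal ≤ (c j).asIdeal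
      simp only [hc, PrimeSpectrum.comap_asIdeal]
      exact Ideal.comap_mono (hVmono i j hij)
    have hkey : ∀ i j : ℕ, i + 2 ≤ j → j ≤ m → c i < c j := by
      intro i j hij hj
      refine lt_of_le_of_ne (hcmono i j (by omega)) (fun heq => ?_)
      have h2 : c i = c (i + 2) :=
        le_antisymm (hcmono i (i + 2) (by omega)) (heq ▸ hcmono (i + 2) j hij)
      haveI := (ℓ (e i)).isPrime
      haveI := (ℓ (e (i + 1))).isPrime
      haveI := (ℓ (e (i + 2))).isPrime
      refine three_primes_not_noeth V hV g hg (ℓ (e i)).asIdeal (ℓ (e (i + 1))).asIdeal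
        (ℓ (e (i + 2))).asIdeal ?_ ?_ ?_ h
      · exact hltI (hVstrict i (i + 1) (by omega) (by omega))
      · exact hltI (hVstrict (i + 1) (i + 2) (by omega) (by omega))
      · have := congrArg PrimeSpectrum.asIdeal h2
        simp only [hc, PrimeSpectrum.comap_asIdeal] at this
        exact this.symm
    have hbotlt : ∀ j : ℕ, 1 ≤ j → j ≤ m →
        (⟨⊥, Ideal.bot_prime⟩ : PrimeSpectrum D) < c j := by
      intro j h1 hj
      refine lt_of_le_of_ne (show (⊥ : Ideal D) ≤ (c j).asIdeal from bot_le) (fun heq => ?_)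
      have hasI : (c j).asIdeal = ⊥ := (congrArg PrimeSpectrum.asIdeal heq).symm
      have hQ : (ℓ (e j)).asIdeal.comap g = ⊥ := by
        simpa only [hc, PrimeSpectrum.comap_asIdeal] using hasI
      have hQ2 := hbot _ hQ
      have hlt := hltI (hVstrict 0 j h1 hj)
      rw [hQ2] at hlt
      exact absurd hlt (by simp)
    rcases Nat.even_or_odd m with ⟨s, hs⟩ | ⟨s, hs⟩
    · -- even case : m = s + s
      set ch : LTSeries (PrimeSpectrum D) :=
        ⟨s, fun j => c (2 * (j : ℕ)), by
          intro j
          refine hkey (2 * (j.castSucc : ℕ)) (2 * (j.succ : ℕ)) ?_ ?_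
          · simp only [Fin.coe_castSucc, Fin.val_succ]; omega
          · simp only [Fin.val_succ]
            have : (j : ℕ) < s := j.2
            omega⟩ with hch
      have hlen := Order.LTSeries.length_le_krullDim ch
      exact cast_le_two_mul (x := s) hlen (by omega)
    · -- odd case : m = 2 * s + 1
      set ch : LTSeries (PrimeSpectrum D) :=
        ⟨s + 1, fun j => if (j : ℕ) = 0 then ⟨⊥, Ideal.bot_prime⟩ else c (2 * (j : ℕ) - 1), by
          intro j
          by_cases hj : (j : ℕ) = 0
          · simp only [Fin.coe_castSucc, Fin.val_succ, hj]
            simp only [if_pos rfl, if_neg (by omega : ¬(0 + 1 = 0))]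
            exact hbotlt 1 le_rfl (by omega)
          · simp only [Fin.coe_castSucc, Fin.val_succ, if_neg hj, if_neg (by omega : ¬((j : ℕ) + 1 = 0))]
            refine hkey (2 * (j : ℕ) - 1) (2 * ((j : ℕ) + 1) - 1) (by omega) ?_
            have : (j : ℕ) < s + 1 := j.2
            omega⟩ with hch
      have hlen := Order.LTSeries.length_le_krullDim ch
      exact cast_le_two_mul (x := s + 1) hlen (by omega)
  exact iSup_le main

end Final
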